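/- Let k be a field and let A, B be commutative k-algebras. In R = (A ⊗_k A) ⊗_k (B ⊗_k B), let 𝔞 be the ideal generated by the image of I_A ⊗_k (B ⊗_k B) and let 𝔟 be the ideal generated by the image of (A ⊗_k A) ⊗_k I_B, where I_A = ker(μ_A : A ⊗ A → A) and I_B = ker(μ_B : B ⊗ B → B). Let I be the multiplication kernel of A ⊗_k B regarded as an ideal of R via the middle-swap isomorphism. Then: (1) I = 𝔞 + 𝔟; and (2) 𝔞 ∩ 𝔟 = 𝔞 · 𝔟, and the multiplication map I_A ⊗_k I_B → R is injective with image 𝔞 ∩ 𝔟. -/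

import Mathlib

open TensorProduct LinearMap Function

section auxFlat
variable {k : Type*} [Field k]
variable {M N MA NB P Q : Type*}
  [AddCommGroup M] [AddCommGroup N] [AddCommGroup MA] [AddCommGroup NB]
  [AddCommGroup P] [AddCommGroup Q]
  [Module k M] [Module k N] [Module k MA] [Module k NB] [Module k P] [Module k Q]
variable (f : M →ₗ[k] MA) (g : N →ₗ[k] NB) (i : P →ₗ[k] M) (j : Q →ₗ[k] N)

theorem aux_ker_rTensor (hi : Exact i f) :
    ker (f.rTensor N) = range (i.rTensor N) :=
  (LinearMap.exact_iff.mp (Module.Flat.rTensor_exact N hi))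

theorem aux_ker_lTensor (hj : Exact j g) :
    ker (g.lTensor M) = range (j.lTensor M) :=
  (LinearMap.exact_iff.mp (Module.Flat.lTensor_exact M hj))

theorem aux_ker_map (hf : Surjective f) (hj : Exact j g)
    (x : M ⊗[k] N) (hx : TensorProduct.map f g x = 0) :
    ∃ u ∈ ker (f.rTensor N), ∃ v ∈ ker (g.lTensor M), x = u + v := by
  have h1 : (g.lTensor MA) ((f.rTensor N) x) = 0 := by
    rw [← LinearMap.comp_apply, lTensor_comp_rTensor, hx]
  rw [← LinearMap.mem_ker, aux_ker_lTensor (M := MA) g j hj] at h1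
  obtain ⟨y, hy⟩ := h1
  obtain ⟨z, rfl⟩ := LinearMap.rTensor_surjective Q hf y
  have comm : ∀ w : M ⊗[k] Q,
      (f.rTensor N) ((j.lTensor M) w) = (j.lTensor MA) ((f.rTensor Q) w) := fun w => by
    rw [← LinearMap.comp_apply, ← LinearMap.comp_apply, rTensor_comp_lTensor,
      lTensor_comp_rTensor]
  have hgj : ∀ w : M ⊗[k] Q, (g.lTensor M) ((j.lTensor M) w) = 0 := fun w => by
    rw [← LinearMap.comp_apply, ← lTensor_comp]
    have : g.comp j = 0 := by ext q; exact hj.apply_apply_eq_zero q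
    rw [this, lTensor_zero, LinearMap.zero_apply]
  exact ⟨x - j.lTensor M z, by rw [LinearMap.mem_ker, map_sub, comm, hy, sub_self],
    j.lTensor M z, by rw [LinearMap.mem_ker, hgj], by abel⟩

theorem aux_inj (hi : Injective i) (hj : Injective j) :
    Injective (TensorProduct.map i j) := by
  rw [← lTensor_comp_rTensor]
  exact (Module.Flat.lTensor_preserves_injective_linearMap (M := M) j hj).comp
    (Module.Flat.rTensor_preserves_injective_linearMap (M := Q) i hi)

theorem aux_range_map_le_ker (hi : Exact i f) (hj : Exact j g) (z : P ⊗[k] Q) :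
    (f.rTensor N) (TensorProduct.map i j z) = 0 ∧
    (g.lTensor M) (TensorProduct.map i j z) = 0 := by
  induction z using TensorProduct.induction_on with
  | zero => simp
  | tmul p q =>
      simp only [TensorProduct.map_tmul, rTensor_tmul, lTensor_tmul,
        hi.apply_apply_eq_zero, hj.apply_apply_eq_zero, TensorProduct.zero_tmul,
        TensorProduct.tmul_zero]
      exact ⟨trivial, trivial⟩
  | add a b ha hb => simp [map_add, ha.1, ha.2, hb.1, hb.2]

theorem aux_inf (hi : Exact i f) (hj : Exact j g) (hiInj : Injective i) :
    (ker (f.rTensor N) ⊓ ker (g.lTensor M) : Submodule k (M ⊗[k] N))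
      = range (TensorProduct.map i j) := by
  apply le_antisymm
  · rintro x ⟨hx1, hx2⟩
    rw [SetLike.mem_coe, LinearMap.mem_ker] at *
    rw [← LinearMap.mem_ker, aux_ker_rTensor f i hi] at hx1
    obtain ⟨y, rfl⟩ := hx1
    have h2 : (i.rTensor NB) ((g.lTensor P) y) = 0 := by
      rw [← LinearMap.comp_apply, rTensor_comp_lTensor, ← lTensor_comp_rTensor,
        LinearMap.comp_apply]
      exact hx2
    have h3 : (g.lTensor P) y = 0 :=
      Module.Flat.rTensor_preserves_injective_linearMap (M := NB) i hiInj
        (by simpa using h2)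
    rw [← LinearMap.mem_ker, aux_ker_lTensor (M := P) g j hj] at h3
    obtain ⟨z, rfl⟩ := h3
    exact ⟨z, by rw [← LinearMap.comp_apply, rTensor_comp_lTensor]⟩
  · rintro x ⟨z, rfl⟩
    exact ⟨(aux_range_map_le_ker f g i j hi hj z).1,
      (aux_range_map_le_ker f g i j hi hj z).2⟩

end auxFlat

variable (k : Type*) [Field k]
variable (A : Type*) [CommRing A] [Algebra k A]
variable (B : Type*) [CommRing B] [Algebra k B]

set_option maxHeartbeats 1000000 in
set_option synthInstance.maxHeartbeats 1000000 in
/-- Let `k` be a field and `A`, `B` commutative `k`-algebras.  In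
`R = (A ⊗ A) ⊗ (B ⊗ B)`, let `𝔞` be the ideal generated by the image of `I_A ⊗ (B ⊗ B)` and
`𝔟` the ideal generated by the image of `(A ⊗ A) ⊗ I_B`, where `I_A`, `I_B` are the kernels of
the multiplication maps.  Let `I` be the multiplication kernel of `A ⊗ B`, regarded as an ideal
of `R` via the middle-swap isomorphism.  Then (1) `I = 𝔞 + 𝔟`, and (2) `𝔞 ⊓ 𝔟 = 𝔞 * 𝔟` and the
multiplication map `I_A ⊗_k I_B → R` is injective with image `𝔞 ⊓ 𝔟`. -/
theorem diagonal_ideal_sum_and_transverse_intersection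
    (IA : Ideal (A ⊗[k] A)) (hIA : IA = RingHom.ker (Algebra.TensorProduct.lmul' k (S := A)))
    (IB : Ideal (B ⊗[k] B)) (hIB : IB = RingHom.ker (Algebra.TensorProduct.lmul' k (S := B)))
    (I : Ideal ((A ⊗[k] A) ⊗[k] (B ⊗[k] B)))
    (hI : I = Ideal.map (Algebra.TensorProduct.tensorTensorTensorComm k k k k A B A B)
      (RingHom.ker (Algebra.TensorProduct.lmul' k (S := A ⊗[k] B))))
    (𝔞 : Ideal ((A ⊗[k] A) ⊗[k] (B ⊗[k] B)))
    (h𝔞 : 𝔞 = Ideal.span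
      {x : (A ⊗[k] A) ⊗[k] (B ⊗[k] B) | ∃ ξ ∈ IA, ∃ β : B ⊗[k] B, x = ξ ⊗ₜ[k] β})
    (𝔟 : Ideal ((A ⊗[k] A) ⊗[k] (B ⊗[k] B)))
    (h𝔟 : 𝔟 = Ideal.span
      {x : (A ⊗[k] A) ⊗[k] (B ⊗[k] B) | ∃ α : A ⊗[k] A, ∃ η ∈ IB, x = α ⊗ₜ[k] η})
    (mult : (↥IA ⊗[k] ↥IB) →ₗ[k] (A ⊗[k] A) ⊗[k] (B ⊗[k] B))
    (hmult : mult = TensorProduct.map ((Submodule.subtype IA).restrictScalars k)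
      ((Submodule.subtype IB).restrictScalars k)) :
    I = 𝔞 + 𝔟 ∧
    𝔞 ⊓ 𝔟 = 𝔞 * 𝔟 ∧
    Function.Injective mult ∧
    (∀ x : (A ⊗[k] A) ⊗[k] (B ⊗[k] B), x ∈ 𝔞 ⊓ 𝔟 ↔ x ∈ LinearMap.range mult) := by
  subst hmult
  -- abbreviations
  set μA : A ⊗[k] A →ₗ[k] A := LinearMap.mul' k A with hμA
  set μB : B ⊗[k] B →ₗ[k] B := LinearMap.mul' k B with hμB
  set iA : ↥IA →ₗ[k] A ⊗[k] A := (Submodule.subtype IA).restrictScalars k with hiAdef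
  set iB : ↥IB →ₗ[k] B ⊗[k] B := (Submodule.subtype IB).restrictScalars k with hiBdef
  have hlA : ∀ x : A ⊗[k] A, Algebra.TensorProduct.lmul' k (S := A) x = μA x := fun x => by
    rw [hμA, ← Algebra.TensorProduct.lmul'_toLinearMap (R := k) (S := A)]; rfl
  have hlB : ∀ x : B ⊗[k] B, Algebra.TensorProduct.lmul' k (S := B) x = μB x := fun x => by
    rw [hμB, ← Algebra.TensorProduct.lmul'_toLinearMap (R := k) (S := B)]; rfl
  have hmemA : ∀ x : A ⊗[k] A, x ∈ IA ↔ μA x = 0 := fun x => by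
    rw [hIA, RingHom.mem_ker, hlA]
  have hmemB : ∀ x : B ⊗[k] B, x ∈ IB ↔ μB x = 0 := fun x => by
    rw [hIB, RingHom.mem_ker, hlB]
  have hexA : Exact iA μA := by
    intro y
    constructor
    · intro hy
      exact ⟨⟨y, (hmemA y).mpr hy⟩, rfl⟩
    · rintro ⟨⟨w, hw⟩, rfl⟩
      exact (hmemA w).mp hw
  have hexB : Exact iB μB := by
    intro y
    constructor
    · intro hy
      exact ⟨⟨y, (hmemB y).mpr hy⟩, rfl⟩
    · rintro ⟨⟨w, hw⟩, rfl⟩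
      exact (hmemB w).mp hw
  have hinjA : Injective iA := fun x y h => Subtype.ext h
  have hinjB : Injective iB := fun x y h => Subtype.ext h
  have hsurjA : Surjective μA := fun a => ⟨a ⊗ₜ 1, by simp [hμA]⟩
  have hsurjB : Surjective μB := fun b => ⟨b ⊗ₜ 1, by simp [hμB]⟩
  -- the ring homs whose kernels are 𝔞, 𝔟
  set Fa : (A ⊗[k] A) ⊗[k] (B ⊗[k] B) →ₐ[k] A ⊗[k] (B ⊗[k] B) :=
    Algebra.TensorProduct.map (Algebra.TensorProduct.lmul' k (S := A))
      (AlgHom.id k (B ⊗[k] B)) with hFadef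
  set Fb : (A ⊗[k] A) ⊗[k] (B ⊗[k] B) →ₐ[k] (A ⊗[k] A) ⊗[k] B :=
    Algebra.TensorProduct.map (AlgHom.id k (A ⊗[k] A))
      (Algebra.TensorProduct.lmul' k (S := B)) with hFbdef
  have hFa : ∀ x, Fa x = μA.rTensor (B ⊗[k] B) x := by
    intro x
    induction x using TensorProduct.induction_on with
    | zero => simp
    | tmul α β => simp [hFadef, hlA]
    | add a b ha hb => rw [map_add, map_add, ha, hb]
  have hFb : ∀ x, Fb x = μB.lTensor (A ⊗[k] A) x := by
    intro x
    induction x using TensorProduct.induction_on with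
    | zero => simp
    | tmul α β => simp [hFbdef, hlB]
    | add a b ha hb => rw [map_add, map_add, ha, hb]
  -- membership descriptions
  have mem_a : ∀ x, x ∈ 𝔞 ↔ μA.rTensor (B ⊗[k] B) x = 0 := by
    intro x
    constructor
    · intro hx
      rw [h𝔞] at hx
      rw [← hFa]
      refine Submodule.span_induction ?_ ?_ ?_ ?_ hx
      · rintro y ⟨ξ, hξ, β, rfl⟩
        rw [hFadef]
        simp only [Algebra.TensorProduct.map_tmul, AlgHom.coe_id, id_eq]
        rw [hlA, (hmemA ξ).mp hξ, TensorProduct.zero_tmul]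
      · exact map_zero _
      · intro a b _ _ ha hb
        rw [map_add, ha, hb, add_zero]
      · intro r y _ hy
        rw [smul_eq_mul, map_mul, hy, mul_zero]
    · intro hx
      rw [← LinearMap.mem_ker, aux_ker_rTensor μA iA hexA] at hx
      obtain ⟨y, rfl⟩ := hx
      induction y using TensorProduct.induction_on with
      | zero => simpa using 𝔞.zero_mem
      | tmul ξ β =>
          rw [rTensor_tmul, h𝔞]
          exact Ideal.subset_span ⟨ξ.1, ξ.2, β, rfl⟩
      | add a b ha hb => rw [map_add]; exact 𝔞.add_mem ha hb
  have mem_b : ∀ x, x ∈ 𝔟 ↔ μB.lTensor (A ⊗[k] A) x = 0 := by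
    intro x
    constructor
    · intro hx
      rw [h𝔟] at hx
      rw [← hFb]
      refine Submodule.span_induction ?_ ?_ ?_ ?_ hx
      · rintro y ⟨α, η, hη, rfl⟩
        rw [hFbdef]
        simp only [Algebra.TensorProduct.map_tmul, AlgHom.coe_id, id_eq]
        rw [hlB, (hmemB η).mp hη, TensorProduct.tmul_zero]
      · exact map_zero _
      · intro a b _ _ ha hb
        rw [map_add, ha, hb, add_zero]
      · intro r y _ hy
        rw [smul_eq_mul, map_mul, hy, mul_zero]
    · intro hx
      rw [← LinearMap.mem_ker, aux_ker_lTensor μB iB hexB] at hx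
      obtain ⟨y, rfl⟩ := hx
      induction y using TensorProduct.induction_on with
      | zero => simpa using 𝔟.zero_mem
      | tmul α η =>
          rw [lTensor_tmul, h𝔟]
          exact Ideal.subset_span ⟨α, η.1, η.2, rfl⟩
      | add a b ha hb => rw [map_add]; exact 𝔟.add_mem ha hb
  -- the ring hom whose kernel is I
  set G : (A ⊗[k] A) ⊗[k] (B ⊗[k] B) →ₐ[k] A ⊗[k] B :=
    Algebra.TensorProduct.map (Algebra.TensorProduct.lmul' k (S := A))
      (Algebra.TensorProduct.lmul' k (S := B)) with hGdef
  have hGcomp : ∀ x : (A ⊗[k] A) ⊗[k] (B ⊗[k] B),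
      (Algebra.TensorProduct.lmul' k (S := A ⊗[k] B))
        ((Algebra.TensorProduct.tensorTensorTensorComm k k k k A B A B).symm x) = G x := by
    suffices h : (Algebra.TensorProduct.lmul' k (S := A ⊗[k] B)).comp
        ((Algebra.TensorProduct.tensorTensorTensorComm k k k k A B A B).symm : _ →ₐ[k] _) = G from
      fun x => DFunLike.congr_fun h x
    rw [hGdef]
    ext a
    all_goals simp [Algebra.TensorProduct.tensorTensorTensorComm_symm,
      Algebra.TensorProduct.one_def]
  have hG : ∀ x, G x = TensorProduct.map μA μB x := by
    intro x
    induction x using TensorProduct.induction_on with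
    | zero => simp
    | tmul α β => simp [hGdef, hlA, hlB]
    | add a b ha hb => rw [map_add, map_add, ha, hb]
  have mem_I : ∀ x, x ∈ I ↔ TensorProduct.map μA μB x = 0 := by
    intro x
    rw [hI, Ideal.mem_map_of_equiv]
    constructor
    · rintro ⟨w, hw, rfl⟩
      rw [← hG, ← hGcomp, AlgEquiv.symm_apply_apply]
      exact RingHom.mem_ker.mp hw
    · intro h
      refine ⟨(Algebra.TensorProduct.tensorTensorTensorComm k k k k A B A B).symm x,
        RingHom.mem_ker.mpr ?_, AlgEquiv.apply_symm_apply _ _⟩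
      rw [hGcomp, hG]
      exact h
  -- part 1 : I = 𝔞 + 𝔟
  have part1 : I = 𝔞 + 𝔟 := by
    ext x
    rw [mem_I, Submodule.add_eq_sup]
    constructor
    · intro hx
      obtain ⟨u, hu, v, hv, rfl⟩ := aux_ker_map μA μB iB hsurjA hexB x hx
      exact Submodule.mem_sup.mpr
        ⟨u, (mem_a u).mpr (LinearMap.mem_ker.mp hu),
         v, (mem_b v).mpr (LinearMap.mem_ker.mp hv), rfl⟩
    · intro hx
      obtain ⟨u, hu, v, hv, rfl⟩ := Submodule.mem_sup.mp hx
      rw [map_add]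
      have h1 : TensorProduct.map μA μB u = 0 := by
        rw [← lTensor_comp_rTensor, LinearMap.comp_apply, (mem_a u).mp hu, map_zero]
      have h2 : TensorProduct.map μA μB v = 0 := by
        rw [← rTensor_comp_lTensor, LinearMap.comp_apply, (mem_b v).mp hv, map_zero]
      rw [h1, h2, add_zero]
  -- intersection = range of mult
  have hrange : ∀ x : (A ⊗[k] A) ⊗[k] (B ⊗[k] B),
      x ∈ 𝔞 ⊓ 𝔟 ↔ x ∈ LinearMap.range (TensorProduct.map iA iB) := by
    intro x
    have key := aux_inf μA μB iA iB hexA hexB hinjA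
    rw [Submodule.mem_inf, mem_a, mem_b]
    constructor
    · rintro ⟨h1, h2⟩
      have hmem : x ∈ (ker (μA.rTensor (B ⊗[k] B)) ⊓ ker (μB.lTensor (A ⊗[k] A)) :
          Submodule k _) :=
        Submodule.mem_inf.mpr ⟨LinearMap.mem_ker.mpr h1, LinearMap.mem_ker.mpr h2⟩
      rwa [key] at hmem
    · intro h
      have hmem : x ∈ (ker (μA.rTensor (B ⊗[k] B)) ⊓ ker (μB.lTensor (A ⊗[k] A)) :
          Submodule k _) := by rwa [key]
      obtain ⟨hm1, hm2⟩ := Submodule.mem_inf.mp hmem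
      exact ⟨LinearMap.mem_ker.mp hm1, LinearMap.mem_ker.mp hm2⟩
  -- part 2 : 𝔞 ⊓ 𝔟 = 𝔞 * 𝔟
  have part2 : 𝔞 ⊓ 𝔟 = 𝔞 * 𝔟 := by
    apply le_antisymm _ Ideal.mul_le_inf
    intro x hx
    obtain ⟨z, rfl⟩ := (hrange x).mp hx
    clear hx
    induction z using TensorProduct.induction_on with
    | zero => simpa using Ideal.zero_mem _
    | tmul ξ η =>
        have heq : TensorProduct.map iA iB (ξ ⊗ₜ[k] η) = ξ.1 ⊗ₜ[k] η.1 := by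
          simp [hiAdef, hiBdef]
        rw [heq]
        have hprod : (ξ.1 ⊗ₜ[k] (1 : B ⊗[k] B)) * ((1 : A ⊗[k] A) ⊗ₜ[k] η.1)
            = ξ.1 ⊗ₜ[k] η.1 := by
          rw [Algebra.TensorProduct.tmul_mul_tmul, mul_one, one_mul]
        rw [← hprod]
        exact Ideal.mul_mem_mul
          (h𝔞 ▸ Ideal.subset_span ⟨ξ.1, ξ.2, 1, rfl⟩)
          (h𝔟 ▸ Ideal.subset_span ⟨1, η.1, η.2, rfl⟩)
    | add a b ha hb =>
        rw [map_add]
        exact Ideal.add_mem _ ha hb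
  exact ⟨part1, part2, aux_inj iA iB hinjA hinjB, hrange⟩
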